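/- Let m, n be coprime positive integers. The number of (m,n)-Dyck paths D that equal their own rank complement is binomial(⌊m/2⌋+⌊n/2⌋, ⌊m/2⌋). -/

import Mathlib

open Nat

/-- Number of north steps among the first `i` steps of the path `P`
(`true` = north step `N`, `false` = east step `E`). -/
def nSteps (P : List Bool) (i : ℕ) : ℕ := (P.take i).count true

/-- Number of east steps among the first `i` steps. -/
def eSteps (P : List Bool) (i : ℕ) : ℕ := (P.take i).count false

/-- Rank `m*b - n*a` of the `i`-th lattice point `(a,b)` of the path. -/
def rank (m n : ℕ) (P : List Bool) (i : ℕ) : ℤ :=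
  (m : ℤ) * nSteps P i - (n : ℤ) * eSteps P i

/-- A lattice path from `(0,0)` to `(m,n)`: `m+n` unit steps, `n` of them north. -/
def IsPath (m n : ℕ) (P : List Bool) : Prop :=
  P.length = m + n ∧ P.count true = n

/-- An `(m,n)`-Dyck path: a path staying weakly above the diagonal,
equivalently with all ranks nonnegative. -/
def IsDyck (m n : ℕ) (P : List Bool) : Prop :=
  IsPath m n P ∧ ∀ i ≤ m + n, 0 ≤ rank m n P i

/-- The set of ranks of the first `m+n` lattice points of the path. -/
def rankSet (m n : ℕ) (P : List Bool) : Finset ℤ :=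
  (Finset.range (m + n)).image (rank m n P)

/-- Ranks of south ends (starting points of north steps). -/
def southRanks (m n : ℕ) (P : List Bool) : Finset ℤ :=
  ((Finset.range (m + n)).filter (fun i => P.getD i false = true)).image (rank m n P)

/-- Ranks of west ends (starting points of east steps). -/
def westRanks (m n : ℕ) (P : List Bool) : Finset ℤ :=
  ((Finset.range (m + n)).filter (fun i => P.getD i true = false)).image (rank m n P)

/-- Transpose of a path: reverse the word and exchange `N` and `E`. -/
def transpose (P : List Bool) : List Bool := (P.map (fun b => !b)).reverse

/-- `D'` is the rank complement of `D`: its rank set is `M - r(D)`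
where `M` is the maximum rank of `D`. -/
def IsRankComplement (m n : ℕ) (D D' : List Bool) : Prop :=
  ∃ M : ℤ, IsGreatest (↑(rankSet m n D) : Set ℤ) M ∧
    rankSet m n D' = (rankSet m n D).image (fun r => M - r)

/-- A partition, encoded as a weakly decreasing list of positive integers. -/
def IsPartition (L : List ℕ) : Prop :=
  L.Pairwise (· ≥ ·) ∧ ∀ x ∈ L, 0 < x

/-- Hook length of the cell in (0-based) row `i`, column `j`. -/
def hook (L : List ℕ) (i j : ℕ) : ℕ :=
  L.getD i 0 - j + (L.drop (i + 1)).countP (fun x => decide (j < x))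

/-- `L` is an `n`-core: no hook length is divisible by `n`. -/
def IsCore (n : ℕ) (L : List ℕ) : Prop :=
  ∀ i < L.length, ∀ j < L.getD i 0, ¬ (n ∣ hook L i j)

/-- The set of first-column hook lengths of `L`. -/
def firstColHooks (L : List ℕ) : Finset ℕ :=
  (Finset.range L.length).image (fun i => hook L i 0)

/-- Conjugate (transpose) partition. -/
def conjugate (L : List ℕ) : List ℕ :=
  (List.range (L.getD 0 0)).map (fun j => L.countP (fun x => decide (j < x)))

/-- `H` is `n`-flush: no element is a multiple of `n`, and it is closed
under subtracting `n` while staying positive. -/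
def IsFlush (n : ℕ) (H : Finset ℕ) : Prop :=
  (∀ h ∈ H, ¬ (n ∣ h)) ∧ ∀ h ∈ H, n < h → h - n ∈ H

/-- `s_i^n(H)`: the maximum of `((n+H) ∪ {i}) ∩ (i + nℤ)`. -/
def sFun (n : ℕ) (H : Finset ℕ) (i : ℕ) : ℕ :=
  (insert i ((H.filter (fun h => h % n = i % n)).image (fun h => h + n))).max'
    (Finset.insert_nonempty _ _)

/-- `S^n(H) = {s_0, ..., s_{n-1}}`. -/
def sSet (n : ℕ) (H : Finset ℕ) : Finset ℕ := (Finset.range n).image (sFun n H)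

/-- The lattice point `(a,b)` lies strictly to the right of the path `D`
inside the `m × n` rectangle: every lattice point of `D` at height `b`
has `x`-coordinate less than `a`. -/
def StrictlyRightOf (m n : ℕ) (D : List Bool) (a b : ℕ) : Prop :=
  a ≤ m ∧ b ≤ n ∧ ∀ i ≤ m + n, (D.take i).count true = b → (D.take i).count false < a

/-- The positive ranks of lattice points lying strictly to the right of `D`. -/
def andersonSet (m n : ℕ) (D : List Bool) : Set ℕ :=
  {h | 0 < h ∧ ∃ a b : ℕ, StrictlyRightOf m n D a b ∧ (h : ℤ) = (m : ℤ) * b - (n : ℤ) * a}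

/-- The `x`-coordinate of the vertical step of `D` at height `y`
(the number of east steps taken at heights `≤ y`). -/
def southX (D : List Bool) (y : ℕ) : ℕ :=
  (List.range D.length).countP
    (fun i => decide (D.getD i true = false ∧ (D.take i).count true ≤ y))

/-- The partition formed by the cells above the path `D`
inside a rectangle of height `n`. -/
def pathPartition (n : ℕ) (D : List Bool) : List ℕ :=
  (((List.range n).reverse).map (fun y => southX D y)).filter (fun x => decide (0 < x))

/-- Arm of the cell `(i,j)` of `L`. -/
def armL (L : List ℕ) (i j : ℕ) : ℕ := L.getD i 0 - (j + 1)

/-- Leg of the cell `(i,j)` of `L`. -/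
def legL (L : List ℕ) (i j : ℕ) : ℕ := (L.drop (i + 1)).countP (fun x => decide (j < x))

/-- The dinv statistic of an `(m,n)`-Dyck path: the number of cells `c` of the
partition above the path with `arm(c)/(leg(c)+1) ≤ m/n < (arm(c)+1)/leg(c)`. -/
def dinv (m n : ℕ) (D : List Bool) : ℕ :=
  ((Finset.range (pathPartition n D).length ×ˢ Finset.range m).filter
    (fun p => p.2 < (pathPartition n D).getD p.1 0 ∧
      armL (pathPartition n D) p.1 p.2 * n ≤ m * (legL (pathPartition n D) p.1 p.2 + 1) ∧
      m * legL (pathPartition n D) p.1 p.2 < n * (armL (pathPartition n D) p.1 p.2 + 1))).card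

/-- `codinv(D) = #{(r_s, r_w) : r_s ∈ S(D), r_w ∈ W(D), r_s < r_w}`. -/
def codinv (m n : ℕ) (D : List Bool) : ℕ :=
  ((southRanks m n D ×ˢ westRanks m n D).filter (fun p => p.1 < p.2)).card

/-- The skew length of an `(m,n)`-core: the number of cells lying both in an
`n`-row (a row `i` with `h_i + n ∈ S^n(H_λ)`) and in the `m`-boundary
(hook length `< m`). -/
def skewLength (m n : ℕ) (L : List ℕ) : ℕ :=
  ((Finset.range L.length ×ˢ Finset.range (L.headD 0)).filter
    (fun p => p.2 < L.getD p.1 0 ∧ hook L p.1 p.2 < m ∧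
      hook L p.1 0 + n ∈ sSet n (firstColHooks L))).card
-- auxiliary
def val (m n : ℕ) (b : Bool) : ℤ := if b then (m:ℤ) else -(n:ℤ)

def fp (m n : ℕ) (P : List Bool) (j : ℤ) : Bool :=
  P.getD (j % ((m+n : ℕ) : ℤ)).toNat false

def rho (m n : ℕ) (P : List Bool) (j : ℤ) : ℤ :=
  rank m n P (j % ((m+n : ℕ) : ℤ)).toNat

lemma count_true_add_count_false (l : List Bool) :
    l.count true + l.count false = l.length := by
  induction l with
  | nil => simp
  | cons b t ih => cases b <;> simp [List.count_cons, ih] <;> omega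

lemma rank_zero (m n : ℕ) (P : List Bool) : rank m n P 0 = 0 := by
  simp [rank, nSteps, eSteps]

lemma rank_succ (m n : ℕ) (P : List Bool) (i : ℕ) (hi : i < P.length) :
    rank m n P (i+1) = rank m n P i + val m n (P.getD i false) := by
  have h : P.take (i+1) = P.take i ++ [P[i]] := by
    rw [← List.take_concat_get, List.concat_eq_append]
  have hgetD : P.getD i false = P[i] := by
    rw [List.getD_eq_getElem]
  rw [rank, rank, nSteps, eSteps, nSteps, eSteps, h, hgetD]
  cases hb : P[i] <;> simp [List.count_append, val] <;> ring

lemma rank_total (m n : ℕ) (P : List Bool) (hP : P.length = m + n)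
    (hn : P.count true = n) : rank m n P (m+n) = 0 := by
  have h1 : P.take (m+n) = P := List.take_of_length_le (by omega)
  have h2 := count_true_add_count_false P
  have h3 : P.count false = m := by omega
  simp [rank, nSteps, eSteps, h1, hn, h3]
  ring

lemma rank_modeq (m n : ℕ) (P : List Bool) (hP : P.length = m + n)
    (i : ℕ) (hi : i ≤ m + n) :
    ((m+n : ℕ) : ℤ) ∣ rank m n P i - (m : ℤ) * i := by
  have hlen : (P.take i).length = i := by
    rw [List.length_take]; omega
  have h2 := count_true_add_count_false (P.take i)
  rw [hlen] at h2
  rw [rank, nSteps, eSteps]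
  refine ⟨-((P.take i).count false : ℤ), ?_⟩
  have : ((P.take i).count true : ℤ) + (P.take i).count false = i := by
    exact_mod_cast h2
  push_cast
  nlinarith [this]

section Rho
variable (m n : ℕ)

lemma emod_toNat_lt (hL : 0 < m + n) (j : ℤ) : (j % ((m+n:ℕ):ℤ)).toNat < m + n := by
  have h1 : 0 ≤ j % ((m+n:ℕ):ℤ) := Int.emod_nonneg j (by exact_mod_cast hL.ne')
  have h2 : j % ((m+n:ℕ):ℤ) < ((m+n:ℕ):ℤ) := Int.emod_lt_of_pos j (by exact_mod_cast hL)
  omega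

lemma rho_congr (P : List Bool) {i j : ℤ} (h : ((m+n:ℕ):ℤ) ∣ i - j) :
    rho m n P i = rho m n P j := by
  have he : i % ((m+n:ℕ):ℤ) = j % ((m+n:ℕ):ℤ) := by
    have : ((m+n:ℕ):ℤ) ∣ j - i := by
      have := dvd_neg.mpr h; rwa [neg_sub] at this
    exact Int.modEq_iff_dvd.mpr this
  unfold rho; rw [he]

lemma fp_congr (P : List Bool) {i j : ℤ} (h : ((m+n:ℕ):ℤ) ∣ i - j) :
    fp m n P i = fp m n P j := by
  have he : i % ((m+n:ℕ):ℤ) = j % ((m+n:ℕ):ℤ) := by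
    have : ((m+n:ℕ):ℤ) ∣ j - i := by
      have := dvd_neg.mpr h; rwa [neg_sub] at this
    exact Int.modEq_iff_dvd.mpr this
  unfold fp; rw [he]

lemma rho_eq_rank (P : List Bool) (i : ℕ) (hi : i < m+n) :
    rho m n P i = rank m n P i := by
  unfold rho
  congr 1
  rw [Int.emod_eq_of_lt (by positivity) (by exact_mod_cast hi)]
  simp

lemma rho_zero (P : List Bool) : rho m n P 0 = 0 := by
  unfold rho
  simp [rank_zero]

lemma rho_dvd_zero (P : List Bool) {j : ℤ} (h : ((m+n:ℕ):ℤ) ∣ j) :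
    rho m n P j = 0 := by
  have h' : ((m+n:ℕ):ℤ) ∣ j - 0 := by simpa using h
  rw [rho_congr m n P h', rho_zero]

lemma rho_mem (P : List Bool) (hL : 0 < m + n) (j : ℤ) :
    rho m n P j ∈ rankSet m n P :=
  Finset.mem_image.mpr ⟨_, Finset.mem_range.mpr (emod_toNat_lt m n hL j), rfl⟩

lemma rho_nonneg (P : List Bool) (hL : 0 < m + n) (hD : IsDyck m n P) (j : ℤ) :
    0 ≤ rho m n P j :=
  hD.2 _ (le_of_lt (emod_toNat_lt m n hL j))

lemma val_inj (hm : 0 < m) (hn : 0 < n) {b b' : Bool}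
    (h : val m n b = val m n b') : b = b' := by
  cases b <;> cases b' <;> simp_all [val] <;> omega

lemma rho_step (P : List Bool) (hP : P.length = m + n) (hcnt : P.count true = n)
    (hL : 0 < m + n) (j : ℤ) :
    rho m n P (j+1) = rho m n P j + val m n (fp m n P j) := by
  set i := (j % ((m+n:ℕ):ℤ)).toNat with hidef
  have hi : i < m + n := emod_toNat_lt m n hL j
  have hji : ((m+n:ℕ):ℤ) ∣ j - (i:ℤ) := by
    have h0 : 0 ≤ j % ((m+n:ℕ):ℤ) := Int.emod_nonneg j (by exact_mod_cast hL.ne')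
    have : (i:ℤ) = j % ((m+n:ℕ):ℤ) := by rw [hidef]; exact Int.toNat_of_nonneg h0
    rw [this]
    exact Int.dvd_self_sub_of_emod_eq rfl
  have hfp : fp m n P j = P.getD i false := rfl
  have hrj : rho m n P j = rank m n P i := by
    rw [rho_congr m n P (show ((m+n:ℕ):ℤ) ∣ j - (i:ℤ) from hji), rho_eq_rank m n P i hi]
  have hstep := rank_succ m n P i (by omega)
  by_cases hc : i + 1 < m + n
  · have h1 : rho m n P (j+1) = rank m n P (i+1) := by
      rw [rho_congr m n P (show ((m+n:ℕ):ℤ) ∣ (j+1) - ((i+1:ℕ):ℤ) by convert hji using 1; push_cast; ring), rho_eq_rank m n P (i+1) hc]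
    rw [h1, hstep, hrj, hfp]
  · have hie : i + 1 = m + n := by omega
    have h1 : rho m n P (j+1) = 0 := by
      apply rho_dvd_zero
      have : ((m+n:ℕ):ℤ) ∣ (j + 1) - ((i+1:ℕ):ℤ) := by convert hji using 1; push_cast; ring
      rw [hie] at this
      have h2 : ((m+n:ℕ):ℤ) ∣ ((m+n:ℕ):ℤ) := dvd_rfl
      have := dvd_add this h2
      rwa [sub_add_cancel] at this
    rw [h1, hrj, hfp, ← hstep, hie, rank_total m n P hP hcnt]

lemma rho_modeq (P : List Bool) (hP : P.length = m + n) (hL : 0 < m + n) (j : ℤ) :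
    ((m+n:ℕ):ℤ) ∣ rho m n P j - (m:ℤ) * j := by
  set i := (j % ((m+n:ℕ):ℤ)).toNat with hidef
  have hi : i < m + n := emod_toNat_lt m n hL j
  have h1 := rank_modeq m n P hP i (le_of_lt hi)
  have hji : ((m+n:ℕ):ℤ) ∣ j - (i:ℤ) := by
    have h0 : 0 ≤ j % ((m+n:ℕ):ℤ) := Int.emod_nonneg j (by exact_mod_cast hL.ne')
    have : (i:ℤ) = j % ((m+n:ℕ):ℤ) := by rw [hidef]; exact Int.toNat_of_nonneg h0
    rw [this]; exact Int.dvd_self_sub_of_emod_eq rfl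
  have h2 : ((m+n:ℕ):ℤ) ∣ (m:ℤ) * ((i:ℤ) - j) := Dvd.dvd.mul_left (by rw [show (i:ℤ) - j = -(j - (i:ℤ)) by ring]; exact dvd_neg.mpr hji) _
  have : rho m n P j - (m:ℤ)*j = (rank m n P i - (m:ℤ)*i) + (m:ℤ)*((i:ℤ) - j) := by
    unfold rho; rw [← hidef]; ring
  rw [this]
  exact dvd_add h1 h2

lemma coprime_L (hco : Nat.Coprime m n) : Nat.Coprime (m+n) m := by
  have := Nat.Coprime.symm hco
  simpa [Nat.coprime_comm] using (Nat.coprime_add_self_left.mpr this)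

lemma rho_inj (P : List Bool) (hP : P.length = m + n) (hL : 0 < m + n)
    (hco : Nat.Coprime m n) {i j : ℤ} (h : rho m n P i = rho m n P j) :
    ((m+n:ℕ):ℤ) ∣ i - j := by
  have h1 := rho_modeq m n P hP hL i
  have h2 := rho_modeq m n P hP hL j
  have h3 : ((m+n:ℕ):ℤ) ∣ (m:ℤ) * (i - j) := by
    have h4 : (m:ℤ)*(i-j) = (rho m n P j - (m:ℤ)*j) - (rho m n P i - (m:ℤ)*i) := by
      rw [h]; ring
    rw [h4]; exact dvd_sub h2 h1
  have hcop : IsCoprime ((m+n:ℕ):ℤ) ((m:ℕ):ℤ) := by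
    rw [Int.isCoprime_iff_gcd_eq_one, Int.gcd_natCast_natCast]
    exact coprime_L m n hco
  exact hcop.dvd_of_dvd_mul_left h3

lemma const_of_step {g : ℤ → ℤ} (h : ∀ j, g (j+1) = g j) : ∀ j, g j = g 0 := by
  intro j
  induction j using Int.induction_on with
  | zero => rfl
  | succ k ih => rw [h k]; exact ih
  | pred k ih =>
      have := h (-(k+1))
      rw [show (-(k:ℤ) - 1) = -((k:ℤ)+1) by ring, ← this]
      convert ih using 2
      ring

lemma rho_shift (P Q : List Bool) (hP : P.length = m + n) (hPc : P.count true = n)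
    (hQ : Q.length = m + n) (hQc : Q.count true = n) (hL : 0 < m + n)
    (t : ℤ) (hf : ∀ j, fp m n P j = fp m n Q (j + t)) (j : ℤ) :
    rho m n P j = rho m n Q (j + t) - rho m n Q t := by
  have key : ∀ x : ℤ, (fun y => rho m n P y - rho m n Q (y + t)) (x+1)
      = (fun y => rho m n P y - rho m n Q (y + t)) x := by
    intro x
    simp only
    rw [rho_step m n P hP hPc hL x, show x + 1 + t = (x + t) + 1 by ring,
      rho_step m n Q hQ hQc hL (x+t), hf x]
    ring
  have := const_of_step (g := fun y => rho m n P y - rho m n Q (y + t)) key j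
  rw [rho_zero, zero_add] at this
  linarith [this]

lemma symm_to_rc (P : List Bool) (hL : 0 < m + n) (hD : IsDyck m n P) (c : ℤ)
    (hsym : ∀ j, fp m n P (c - j) = fp m n P j) : IsRankComplement m n P P := by
  obtain ⟨⟨hP, hPc⟩, hpos⟩ := hD
  have hmain : ∀ j : ℤ, rho m n P (c+1-j) = rho m n P (c+1) - rho m n P j := by
    have key : ∀ x : ℤ, (fun y => rho m n P (c+1-y) + rho m n P y) (x+1)
        = (fun y => rho m n P (c+1-y) + rho m n P y) x := by
      intro x
      simp only
      rw [show c+1-(x+1) = c - x by ring, rho_step m n P hP hPc hL x]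
      have h2 : rho m n P (c+1-x) = rho m n P (c-x) + val m n (fp m n P (c-x)) := by
        rw [show c+1-x = (c-x)+1 by ring]
        exact rho_step m n P hP hPc hL (c-x)
      rw [h2, hsym x]
      ring
    intro j
    have := const_of_step (g := fun y => rho m n P (c+1-y) + rho m n P y) key j
    rw [rho_zero] at this
    have h0 : rho m n P (c+1-0) = rho m n P (c+1) := by norm_num
    rw [h0] at this
    linarith
  set M := rho m n P (c+1) with hM
  have hmem : ∀ r ∈ rankSet m n P, ∃ j : ℤ, r = rho m n P j := by
    intro r hr
    obtain ⟨i, hi, hrk⟩ := Finset.mem_image.mp hr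
    exact ⟨i, by rw [rho_eq_rank m n P i (Finset.mem_range.mp hi)]; exact hrk.symm⟩
  refine ⟨M, ⟨rho_mem m n P hL (c+1), ?_⟩, ?_⟩
  · intro r hr
    obtain ⟨j, rfl⟩ := hmem r hr
    have := hmain (c+1-j)
    have h2 : rho m n P (c+1-(c+1-j)) = rho m n P j := by norm_num
    rw [h2] at this
    have := rho_nonneg m n P hL ⟨⟨hP, hPc⟩, hpos⟩ (c+1-j)
    linarith [hmain j]
  · apply Finset.ext
    intro r
    constructor
    · intro hr
      obtain ⟨j, rfl⟩ := hmem r hr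
      refine Finset.mem_image.mpr ⟨rho m n P (c+1-j), rho_mem m n P hL _, ?_⟩
      have := hmain j
      linarith [hmain (c+1-j), show rho m n P (c+1-(c+1-j)) = rho m n P j by norm_num]
    · intro hr
      obtain ⟨r', hr', rfl⟩ := Finset.mem_image.mp hr
      obtain ⟨j, rfl⟩ := hmem r' hr'
      have := hmain j
      rw [← this]
      exact rho_mem m n P hL _

lemma rc_to_symm (P : List Bool) (hm : 0 < m) (hn : 0 < n) (hco : Nat.Coprime m n)
    (hD : IsDyck m n P) (hRC : IsRankComplement m n P P) :
    ∃ (M : ℤ) (k : ℕ), k < m+n ∧ rho m n P k = M ∧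
      (∀ j : ℤ, rho m n P ((k:ℤ) - j) = M - rho m n P j) ∧
      (∀ j : ℤ, fp m n P ((k:ℤ) - 1 - j) = fp m n P j) := by
  have hL : 0 < m + n := by omega
  obtain ⟨⟨hP, hPc⟩, hpos⟩ := hD
  obtain ⟨M, hMg, him⟩ := hRC
  obtain ⟨k, hkr, hkrank⟩ := Finset.mem_image.mp hMg.1
  have hk : k < m + n := Finset.mem_range.mp hkr
  have hrhok : rho m n P (k:ℤ) = M := by
    rw [rho_eq_rank m n P k hk]; exact hkrank
  have hmain : ∀ j : ℤ, rho m n P ((k:ℤ) - j) = M - rho m n P j := by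
    intro j
    have hr : rho m n P j ∈ rankSet m n P := rho_mem m n P hL j
    have hmr : M - rho m n P j ∈ rankSet m n P := by
      rw [him]
      exact Finset.mem_image.mpr ⟨rho m n P j, hr, rfl⟩
    obtain ⟨i, hir, hirank⟩ := Finset.mem_image.mp hmr
    have hi : i < m + n := Finset.mem_range.mp hir
    have hrhoi : rho m n P (i:ℤ) = M - rho m n P j := by
      rw [rho_eq_rank m n P i hi]; exact hirank
    have d1 := rho_modeq m n P hP hL (i:ℤ)
    have d2 := rho_modeq m n P hP hL (k:ℤ)
    have d3 := rho_modeq m n P hP hL j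
    have hdm : ((m+n:ℕ):ℤ) ∣ (m:ℤ) * ((i:ℤ) - ((k:ℤ) - j)) := by
      have heq : (m:ℤ) * ((i:ℤ) - ((k:ℤ) - j)) =
          (rho m n P (k:ℤ) - (m:ℤ)*(k:ℤ)) - (rho m n P (i:ℤ) - (m:ℤ)*(i:ℤ))
          - (rho m n P j - (m:ℤ)*j) + (rho m n P (i:ℤ) - rho m n P (k:ℤ) + rho m n P j) := by
        ring
      have hz : rho m n P (i:ℤ) - rho m n P (k:ℤ) + rho m n P j = 0 := by
        rw [hrhoi, hrhok]; ring
      rw [heq, hz, add_zero]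
      exact dvd_sub (dvd_sub d2 d1) d3
    have hcop : IsCoprime ((m+n:ℕ):ℤ) ((m:ℕ):ℤ) := by
      rw [Int.isCoprime_iff_gcd_eq_one, Int.gcd_natCast_natCast]
      exact coprime_L m n hco
    have hdvd := hcop.dvd_of_dvd_mul_left hdm
    rw [← rho_congr m n P hdvd, hrhoi]
  refine ⟨M, k, hk, hrhok, hmain, ?_⟩
  intro j
  apply val_inj m n hm hn
  have s1 : rho m n P ((k:ℤ)-1-j+1) = rho m n P ((k:ℤ)-1-j) + val m n (fp m n P ((k:ℤ)-1-j)) :=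
    rho_step m n P hP hPc hL _
  have s2 : rho m n P (j+1) = rho m n P j + val m n (fp m n P j) :=
    rho_step m n P hP hPc hL _
  have e1 : rho m n P ((k:ℤ)-1-j+1) = rho m n P ((k:ℤ)-j) := by congr 1; ring
  have e2 : rho m n P ((k:ℤ)-1-j) = rho m n P ((k:ℤ)-(j+1)) := by
    congr 1; ring
  rw [e1, e2, hmain (j+1), hmain j] at s1
  linarith [s1, s2]

lemma count_true_eq_card (l : List Bool) :
    l.count true = ((Finset.range l.length).filter (fun i => l.getD i false = true)).card := by
  induction l using List.reverseRecOn with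
  | nil => simp
  | append_singleton t b ih =>
    rw [List.count_append, List.length_append, List.length_singleton,
      Finset.range_add_one, Finset.filter_insert]
    have hlast : (t ++ [b]).getD t.length false = b := by
      rw [List.getD_append_right _ _ _ _ (le_refl _)]
      simp
    have hcongr : (Finset.range t.length).filter (fun i => (t++[b]).getD i false = true)
        = (Finset.range t.length).filter (fun i => t.getD i false = true) := by
      apply Finset.filter_congr
      intro i hi
      rw [List.getD_append _ _ _ _ (Finset.mem_range.mp hi)]
    cases b
    · rw [if_neg (by rw [hlast]; simp), hcongr, ih]
      simp
    · rw [if_pos hlast, Finset.card_insert_of_notMem (by simp), hcongr, ih]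
      simp

lemma emod_toNat_eq (hL : 0 < m + n) {a : ℤ} {b : ℕ} (hb : b < m + n)
    (h : ((m+n:ℕ):ℤ) ∣ a - (b:ℤ)) : (a % ((m+n:ℕ):ℤ)).toNat = b := by
  have he : a % ((m+n:ℕ):ℤ) = (b:ℤ) % ((m+n:ℕ):ℤ) := by
    apply Int.modEq_iff_dvd.mpr
    have := dvd_neg.mpr h; rwa [neg_sub] at this
  rw [he, Int.emod_eq_of_lt (by positivity) (by exact_mod_cast hb)]
  simp

lemma dvd_emod_sub (a : ℤ) : ((m+n:ℕ):ℤ) ∣ (a % ((m+n:ℕ):ℤ)) - a := by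
  have := Int.dvd_self_sub_of_emod_eq (rfl : a % ((m+n:ℕ):ℤ) = a % ((m+n:ℕ):ℤ))
  have h2 := dvd_neg.mpr this
  rwa [neg_sub] at h2

lemma card_filter_shift (hL : 0 < m + n) (f : ℤ → Bool)
    (hf : ∀ x y : ℤ, ((m+n:ℕ):ℤ) ∣ x - y → f x = f y) (t : ℤ) :
    ((Finset.range (m+n)).filter (fun i : ℕ => f (t + (i:ℤ)) = true)).card
      = ((Finset.range (m+n)).filter (fun i : ℕ => f (i:ℤ) = true)).card := by
  apply Finset.card_nbij' (i := fun i : ℕ => ((t + (i:ℤ)) % ((m+n:ℕ):ℤ)).toNat)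
    (j := fun i : ℕ => (((i:ℤ) - t) % ((m+n:ℕ):ℤ)).toNat)
  · intro a ha
    simp only [Finset.mem_coe, Finset.mem_filter, Finset.mem_range] at ha ⊢
    refine ⟨emod_toNat_lt m n hL _, ?_⟩
    rw [← ha.2]
    apply hf
    have h1 := dvd_emod_sub m n (t + (a:ℤ))
    have : (((t + (a:ℤ)) % ((m+n:ℕ):ℤ)).toNat : ℤ) = (t + (a:ℤ)) % ((m+n:ℕ):ℤ) :=
      Int.toNat_of_nonneg (Int.emod_nonneg _ (by exact_mod_cast hL.ne'))
    rw [this]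
    exact h1
  · intro a ha
    simp only [Finset.mem_coe, Finset.mem_filter, Finset.mem_range] at ha ⊢
    refine ⟨emod_toNat_lt m n hL _, ?_⟩
    rw [← ha.2]
    apply hf
    have h1 := dvd_emod_sub m n ((a:ℤ) - t)
    have h2 : ((((a:ℤ) - t) % ((m+n:ℕ):ℤ)).toNat : ℤ) = ((a:ℤ) - t) % ((m+n:ℕ):ℤ) :=
      Int.toNat_of_nonneg (Int.emod_nonneg _ (by exact_mod_cast hL.ne'))
    rw [h2, show t + ((a:ℤ) - t) % ((m+n:ℕ):ℤ) - (a:ℤ)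
        = (((a:ℤ) - t) % ((m+n:ℕ):ℤ)) - ((a:ℤ) - t) by ring]
    exact h1
  · intro a ha
    simp only [Finset.mem_coe, Finset.mem_filter, Finset.mem_range] at ha
    apply emod_toNat_eq m n hL ha.1
    have h1 := dvd_emod_sub m n (t + (a:ℤ))
    have h2 : (((t + (a:ℤ)) % ((m+n:ℕ):ℤ)).toNat : ℤ) = (t + (a:ℤ)) % ((m+n:ℕ):ℤ) :=
      Int.toNat_of_nonneg (Int.emod_nonneg _ (by exact_mod_cast hL.ne'))
    rw [h2]
    have : (t + (a:ℤ)) % ((m+n:ℕ):ℤ) - t - (a:ℤ) = ((t + (a:ℤ)) % ((m+n:ℕ):ℤ)) - (t + (a:ℤ)) := by ring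
    rw [this]
    exact h1
  · intro a ha
    simp only [Finset.mem_coe, Finset.mem_filter, Finset.mem_range] at ha
    apply emod_toNat_eq m n hL ha.1
    have h1 := dvd_emod_sub m n ((a:ℤ) - t)
    have h2 : ((((a:ℤ) - t) % ((m+n:ℕ):ℤ)).toNat : ℤ) = ((a:ℤ) - t) % ((m+n:ℕ):ℤ) :=
      Int.toNat_of_nonneg (Int.emod_nonneg _ (by exact_mod_cast hL.ne'))
    rw [h2]
    have : (a:ℤ) - t % ((m+n:ℕ):ℤ) = (a:ℤ) - t % ((m+n:ℕ):ℤ) := rfl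
    have h3 : t + (((a:ℤ) - t) % ((m+n:ℕ):ℤ)) - (a:ℤ) = (((a:ℤ) - t) % ((m+n:ℕ):ℤ)) - ((a:ℤ) - t) := by ring
    rw [h3]
    exact h1

def hfun (m n : ℕ) (A : Finset ℕ) (x : ℤ) : Bool :=
  let r := (x % ((m+n:ℕ):ℤ)).toNat
  if r = 0 then decide (n % 2 = 1)
  else if 2*r < m+n then decide ((r-1) ∈ A)
  else if 2*r = m+n then false
  else decide ((m+n-r-1) ∈ A)

lemma hfun_congr (A : Finset ℕ) {x y : ℤ} (h : ((m+n:ℕ):ℤ) ∣ x - y) :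
    hfun m n A x = hfun m n A y := by
  have he : x % ((m+n:ℕ):ℤ) = y % ((m+n:ℕ):ℤ) := by
    apply Int.modEq_iff_dvd.mpr
    have := dvd_neg.mpr h; rwa [neg_sub] at this
  unfold hfun; rw [he]

lemma hfun_nat (A : Finset ℕ) (hL : 0 < m + n) (r : ℕ) (hr : r < m+n) :
    hfun m n A (r:ℤ) = (if r = 0 then decide (n % 2 = 1)
      else if 2*r < m+n then decide ((r-1) ∈ A)
      else if 2*r = m+n then false
      else decide ((m+n-r-1) ∈ A)) := by
  unfold hfun
  rw [Int.emod_eq_of_lt (by positivity) (by exact_mod_cast hr)]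
  simp

lemma parity_facts (hm : 0 < m) (hn : 0 < n) (hco : Nat.Coprime m n) :
    2*(m/2+n/2) + 1 = m+n ∨ (2*(m/2+n/2) + 2 = m+n ∧ n % 2 = 1 ∧ m % 2 = 1) := by
  have h2 : m % 2 = 1 ∨ n % 2 = 1 := by
    by_contra h
    push_neg at h
    have hdm : 2 ∣ m := by omega
    have hdn : 2 ∣ n := by omega
    have := Nat.dvd_gcd hdm hdn
    rw [hco] at this
    omega
  omega

lemma hfun_symm (A : Finset ℕ) (hL : 0 < m + n) (x : ℤ) :
    hfun m n A (-x) = hfun m n A x := by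
  set r := (x % ((m+n:ℕ):ℤ)).toNat with hrdef
  have hr : r < m + n := emod_toNat_lt m n hL x
  have hrx : ((m+n:ℕ):ℤ) ∣ x - (r:ℤ) := by
    have h0 : 0 ≤ x % ((m+n:ℕ):ℤ) := Int.emod_nonneg x (by exact_mod_cast hL.ne')
    have : (r:ℤ) = x % ((m+n:ℕ):ℤ) := by rw [hrdef]; exact Int.toNat_of_nonneg h0
    rw [this]; exact Int.dvd_self_sub_of_emod_eq rfl
  by_cases h0 : r = 0
  · have hd : ((m+n:ℕ):ℤ) ∣ x - ((0:ℕ):ℤ) := by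
      have := hrx; rw [h0] at this; simpa using this
    have hd2 : ((m+n:ℕ):ℤ) ∣ -x - ((0:ℕ):ℤ) := by
      have h1 := dvd_neg.mpr hd
      have h2 : -(x - ((0:ℕ):ℤ)) = -x - ((0:ℕ):ℤ) := by push_cast; ring
      rwa [h2] at h1
    rw [hfun_congr m n A hd2, hfun_congr m n A hd]
  · have hc : ((m+n - r : ℕ):ℤ) = ((m+n:ℕ):ℤ) - (r:ℤ) := by
      push_cast [Nat.cast_sub hr.le]
      ring
    have hd2 : ((m+n:ℕ):ℤ) ∣ -x - ((m+n-r:ℕ):ℤ) := by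
      rw [hc]
      have h1 := dvd_neg.mpr hrx
      have h2 := dvd_sub h1 (dvd_refl ((m+n:ℕ):ℤ))
      have h3 : -(x - (r:ℤ)) - ((m+n:ℕ):ℤ) = -x - (((m+n:ℕ):ℤ) - (r:ℤ)) := by ring
      rwa [h3] at h2
    rw [hfun_congr m n A hd2, hfun_congr m n A hrx,
      hfun_nat m n A hL (m+n-r) (by omega), hfun_nat m n A hL r hr]
    rcases lt_trichotomy (2*r) (m+n) with hlt | heq | hgt
    · rw [if_neg (by omega), if_neg (by omega), if_neg (by omega), if_neg h0,
        if_pos hlt, show m+n-(m+n-r)-1 = r-1 by omega]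
    · rw [show m+n-r = r by omega, if_neg h0, if_neg (by omega : ¬ 2*r < m+n), if_pos heq,
        if_neg h0, if_neg (by omega : ¬ 2*r < m+n), if_pos heq]
    · rw [if_neg (by omega), if_pos (by omega), if_neg h0, if_neg (by omega),
        if_neg (by omega), show (m+n-r)-1 = m+n-r-1 by omega]

lemma hfun_count (A : Finset ℕ) (hm : 0 < m) (hn : 0 < n) (hco : Nat.Coprime m n)
    (hA : A ⊆ Finset.range (m/2+n/2)) :
    ((Finset.range (m+n)).filter (fun i : ℕ => hfun m n A (i:ℤ) = true)).card
      = n % 2 + 2 * A.card := by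
  have hL : 0 < m + n := by omega
  have hpar := parity_facts m n hm hn hco
  have hF : 2*(m/2+n/2) + 1 = m+n ∨ 2*(m/2+n/2) + 2 = m+n := by omega
  have hsub : ∀ i ∈ A, i < m/2+n/2 := fun i hi => Finset.mem_range.mp (hA hi)
  have hTeq : (Finset.range (m+n)).filter (fun i : ℕ => hfun m n A (i:ℤ) = true)
      = ((if n % 2 = 1 then ({0} : Finset ℕ) else ∅) ∪ A.image (· + 1))
        ∪ A.image (fun i => m+n-1-i) := by
    ext r
    simp only [Finset.mem_filter, Finset.mem_range, Finset.mem_union, Finset.mem_image]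
    constructor
    · rintro ⟨hr, htrue⟩
      rw [hfun_nat m n A hL r hr] at htrue
      split_ifs at htrue with h1 h2 h3
      · left; left
        have : n % 2 = 1 := by simpa using htrue
        simp [this, h1]
      · left; right
        exact ⟨r-1, by simpa using htrue, by omega⟩
      · right
        have hmem : m+n-r-1 ∈ A := by simpa using htrue
        exact ⟨m+n-r-1, hmem, by omega⟩
    · intro hT
      rcases hT with (hX | ⟨i, hiA, hir⟩) | ⟨i, hiA, hir⟩
      · have hn1 : n % 2 = 1 ∧ r = 0 := by
          by_cases hc : n % 2 = 1 <;> simp [hc] at hX <;> tauto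
        refine ⟨by omega, ?_⟩
        rw [hfun_nat m n A hL r (by omega), if_pos hn1.2]
        simp [hn1.1]
      · have hiF := hsub i hiA
        have hr : r < m + n := by omega
        refine ⟨hr, ?_⟩
        rw [hfun_nat m n A hL r hr, if_neg (by omega), if_pos (by omega),
          show r - 1 = i by omega]
        simpa using hiA
      · have hiF := hsub i hiA
        have hr : r < m + n := by omega
        refine ⟨hr, ?_⟩
        rw [hfun_nat m n A hL r hr, if_neg (by omega), if_neg (by omega),
          if_neg (by omega), show m+n-r-1 = i by omega]
        simpa using hiA
  rw [hTeq]
  have hd1 : Disjoint (if n % 2 = 1 then ({0} : Finset ℕ) else ∅) (A.image (· + 1)) := by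
    rw [Finset.disjoint_left]
    intro a ha hb
    obtain ⟨i, _, hir⟩ := Finset.mem_image.mp hb
    by_cases hc : n % 2 = 1 <;> simp [hc] at ha <;> omega
  have hd2 : Disjoint ((if n % 2 = 1 then ({0} : Finset ℕ) else ∅) ∪ A.image (· + 1))
      (A.image (fun i => m+n-1-i)) := by
    rw [Finset.disjoint_left]
    intro a ha hb
    obtain ⟨i, hiA, hir⟩ := Finset.mem_image.mp hb
    have hiF := hsub i hiA
    rcases Finset.mem_union.mp ha with h | h
    · by_cases hc : n % 2 = 1 <;> simp [hc] at h <;> omega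
    · obtain ⟨i', hi'A, hi'r⟩ := Finset.mem_image.mp h
      have := hsub i' hi'A
      omega
  rw [Finset.card_union_of_disjoint hd2, Finset.card_union_of_disjoint hd1]
  have hc1 : (if n % 2 = 1 then ({0} : Finset ℕ) else ∅).card = n % 2 := by
    split_ifs with hc
    · rw [Finset.card_singleton]; omega
    · rw [Finset.card_empty]; omega
  have hc2 : (A.image (· + 1)).card = A.card :=
    Finset.card_image_of_injective A (add_left_injective 1)
  have hc3 : (A.image (fun i => m+n-1-i)).card = A.card := by
    apply Finset.card_image_of_injOn
    intro i hi j hj hij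
    simp only at hij
    have := hsub i hi
    have := hsub j hj
    omega
  rw [hc1, hc2, hc3]
  ring

def baseWord (m n : ℕ) (A : Finset ℕ) : List Bool :=
  List.ofFn (fun i : Fin (m+n) => hfun m n A (i:ℕ))

noncomputable def minIdx (m n : ℕ) (A : Finset ℕ) : ℕ :=
  if h : ∃ p, p < m+n ∧ ∀ i < m+n,
      rank m n (baseWord m n A) p ≤ rank m n (baseWord m n A) i then h.choose else 0

noncomputable def phi (m n : ℕ) (A : Finset ℕ) : List Bool :=
  List.ofFn (fun i : Fin (m+n) => hfun m n A ((minIdx m n A : ℤ) + (i:ℕ)))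

lemma minIdx_spec (A : Finset ℕ) (hL : 0 < m + n) :
    minIdx m n A < m+n ∧ ∀ i < m+n,
      rank m n (baseWord m n A) (minIdx m n A) ≤ rank m n (baseWord m n A) i := by
  have hex : ∃ p, p < m+n ∧ ∀ i < m+n,
      rank m n (baseWord m n A) p ≤ rank m n (baseWord m n A) i := by
    obtain ⟨b, hb, hmin⟩ := Finset.exists_min_image (Finset.range (m+n))
      (rank m n (baseWord m n A)) ⟨0, Finset.mem_range.mpr hL⟩
    exact ⟨b, Finset.mem_range.mp hb, fun i hi => hmin i (Finset.mem_range.mpr hi)⟩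
  rw [minIdx, dif_pos hex]
  exact hex.choose_spec

lemma fp_ofFn (g : ℤ → Bool) (hg : ∀ {x y : ℤ}, ((m+n:ℕ):ℤ) ∣ x - y → g x = g y)
    (hL : 0 < m + n) (j : ℤ) :
    fp m n (List.ofFn (fun i : Fin (m+n) => g (i:ℕ))) j = g j := by
  unfold fp
  have hlt : (j % ((m+n:ℕ):ℤ)).toNat < (List.ofFn (fun i : Fin (m+n) => g (i:ℕ))).length := by
    rw [List.length_ofFn]
    exact emod_toNat_lt m n hL j
  rw [List.getD_eq_getElem _ _ hlt, List.getElem_ofFn]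
  apply hg
  have h0 : 0 ≤ j % ((m+n:ℕ):ℤ) := Int.emod_nonneg j (by exact_mod_cast hL.ne')
  have : (((j % ((m+n:ℕ):ℤ)).toNat : ℕ) : ℤ) = j % ((m+n:ℕ):ℤ) := Int.toNat_of_nonneg h0
  rw [this]
  exact dvd_emod_sub m n j

lemma fp_baseWord (A : Finset ℕ) (hL : 0 < m + n) (j : ℤ) :
    fp m n (baseWord m n A) j = hfun m n A j :=
  fp_ofFn m n (hfun m n A) (fun h => hfun_congr m n A h) hL j

lemma fp_phi (A : Finset ℕ) (hL : 0 < m + n) (j : ℤ) :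
    fp m n (phi m n A) j = hfun m n A ((minIdx m n A : ℤ) + j) := by
  have : phi m n A = List.ofFn (fun i : Fin (m+n) =>
      (fun x : ℤ => hfun m n A ((minIdx m n A : ℤ) + x)) (i:ℕ)) := rfl
  rw [this, fp_ofFn m n _ (fun {x y} h => hfun_congr m n A (by
    have : ((minIdx m n A : ℤ) + x) - ((minIdx m n A : ℤ) + y) = x - y := by ring
    rw [this]; exact h)) hL]

lemma count_ofFn_eq (g : ℤ → Bool) (hL : 0 < m + n) :
    (List.ofFn (fun i : Fin (m+n) => g (i:ℕ))).count true
      = ((Finset.range (m+n)).filter (fun i : ℕ => g (i:ℤ) = true)).card := by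
  rw [count_true_eq_card, List.length_ofFn]
  apply Finset.card_bij (fun a _ => a) <;> intro a ha <;>
    simp only [Finset.mem_filter, Finset.mem_range] at *
  · obtain ⟨h1, h2⟩ := ha
    refine ⟨h1, ?_⟩
    rw [List.getD_eq_getElem _ _ (by rw [List.length_ofFn]; exact h1), List.getElem_ofFn] at h2
    exact h2
  · exact fun b hb hab => hab
  · refine ⟨a, ⟨ha.1, ?_⟩, rfl⟩
    rw [List.getD_eq_getElem _ _ (by rw [List.length_ofFn]; exact ha.1), List.getElem_ofFn]
    exact ha.2

lemma phi_counts (A : Finset ℕ) (hm : 0 < m) (hn : 0 < n) (hco : Nat.Coprime m n)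
    (hA : A ⊆ Finset.range (m/2+n/2)) (hcard : A.card = n/2) :
    (phi m n A).count true = n ∧ (baseWord m n A).count true = n := by
  have hL : 0 < m + n := by omega
  have hbase : (baseWord m n A).count true = n := by
    rw [baseWord, count_ofFn_eq m n (fun x : ℤ => hfun m n A x) hL, hfun_count m n A hm hn hco hA, hcard]
    omega
  constructor
  · have : phi m n A = List.ofFn (fun i : Fin (m+n) =>
        (fun x : ℤ => hfun m n A ((minIdx m n A : ℤ) + x)) (i:ℕ)) := rfl
    rw [this, count_ofFn_eq m n (fun x : ℤ => hfun m n A ((minIdx m n A : ℤ) + x)) hL]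
    have := card_filter_shift m n hL (hfun m n A)
      (fun x y h => hfun_congr m n A h) (minIdx m n A : ℤ)
    rw [this, hfun_count m n A hm hn hco hA, hcard]
    omega
  · exact hbase

lemma phi_isDyck (A : Finset ℕ) (hm : 0 < m) (hn : 0 < n) (hco : Nat.Coprime m n)
    (hA : A ⊆ Finset.range (m/2+n/2)) (hcard : A.card = n/2) :
    IsDyck m n (phi m n A) := by
  have hL : 0 < m + n := by omega
  obtain ⟨hphic, hbasec⟩ := phi_counts m n A hm hn hco hA hcard
  have hphil : (phi m n A).length = m + n := List.length_ofFn
  have hbasel : (baseWord m n A).length = m + n := List.length_ofFn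
  obtain ⟨hplt, hpmin⟩ := minIdx_spec m n A hL
  set p := minIdx m n A with hp
  have hshift : ∀ j : ℤ, rho m n (phi m n A) j
      = rho m n (baseWord m n A) (j + (p:ℤ)) - rho m n (baseWord m n A) (p:ℤ) := by
    apply rho_shift m n _ _ hphil hphic hbasel hbasec hL
    intro j
    rw [fp_phi m n A hL j, fp_baseWord m n A hL (j + (p:ℤ))]
    congr 1
    ring
  have hmin : ∀ j : ℤ, rho m n (baseWord m n A) (p:ℤ) ≤ rho m n (baseWord m n A) j := by
    intro j
    rw [rho_eq_rank m n _ p hplt]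
    exact hpmin _ (emod_toNat_lt m n hL j)
  refine ⟨⟨hphil, hphic⟩, ?_⟩
  intro i hi
  rcases Nat.lt_or_ge i (m+n) with hlt | hge
  · rw [← rho_eq_rank m n _ i hlt, hshift (i:ℤ)]
    have := hmin ((i:ℤ) + (p:ℤ))
    linarith
  · have : i = m + n := by omega
    rw [this, rank_total m n _ hphil hphic]

lemma phi_isRC (A : Finset ℕ) (hm : 0 < m) (hn : 0 < n) (hco : Nat.Coprime m n)
    (hA : A ⊆ Finset.range (m/2+n/2)) (hcard : A.card = n/2) :
    IsRankComplement m n (phi m n A) (phi m n A) := by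
  have hL : 0 < m + n := by omega
  apply symm_to_rc m n _ hL (phi_isDyck m n A hm hn hco hA hcard) (-2 * (minIdx m n A : ℤ))
  intro j
  rw [fp_phi m n A hL, fp_phi m n A hL]
  have h1 : (minIdx m n A : ℤ) + (-2 * (minIdx m n A : ℤ) - j) = -((minIdx m n A : ℤ) + j) := by
    ring
  rw [h1, hfun_symm m n A hL]

lemma shift_all (f : ℤ → Bool) (d : ℤ) (hf : ∀ x, f (x + d) = f x) :
    ∀ (z : ℤ) (x : ℤ), f (x + d * z) = f x := by
  intro z
  induction z using Int.induction_on with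
  | zero => intro x; simp
  | succ k ih =>
      intro x
      have : x + d * ((k:ℤ)+1) = (x + d * k) + d := by ring
      rw [this, hf, ih]
  | pred k ih =>
      intro x
      have h3 : f ((x - d) + d * (-(k:ℤ))) = f (x - d) := ih (x - d)
      have h4 := hf (x - d)
      rw [show x - d + d = x by ring] at h4
      rw [show x + d * (-(k:ℤ) - 1) = (x - d) + d * (-(k:ℤ)) by ring, h3, h4]

lemma card_filter_period_block (f : ℤ → Bool) (g : ℕ) (k : ℕ)
    (hf : ∀ x : ℤ, f (x + (g:ℤ)) = f x) :
    ((Finset.range (k*g)).filter (fun i : ℕ => f (i:ℤ) = true)).card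
      = k * ((Finset.range g).filter (fun i : ℕ => f (i:ℤ) = true)).card := by
  induction k with
  | zero => simp
  | succ k ih =>
    have hmul : (k+1)*g = k*g + g := by ring
    have hsplit : Finset.range ((k+1)*g) = Finset.range (k*g) ∪ Finset.Ico (k*g) (k*g + g) := by
      rw [hmul, Finset.range_eq_Ico, Finset.range_eq_Ico]
      rw [Finset.Ico_union_Ico_eq_Ico (Nat.zero_le _) (by omega)]
    rw [hsplit, Finset.filter_union, Finset.card_union_of_disjoint, ih]
    · have hIco : ((Finset.Ico (k*g) (k*g + g)).filter (fun i : ℕ => f (i:ℤ) = true)).card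
          = ((Finset.range g).filter (fun i : ℕ => f (i:ℤ) = true)).card := by
        apply Finset.card_nbij' (i := fun i : ℕ => i - k*g) (j := fun i : ℕ => i + k*g)
        · intro a ha
          simp only [Finset.mem_coe, Finset.mem_filter, Finset.mem_Ico, Finset.mem_range] at ha ⊢
          obtain ⟨⟨h1, h2⟩, h3⟩ := ha
          refine ⟨by omega, ?_⟩
          have hcast : ((a - k*g : ℕ) : ℤ) = (a:ℤ) - (k:ℤ)*(g:ℤ) := by
            push_cast [Nat.cast_sub h1]
            ring
          rw [hcast]
          have hs := shift_all f (g:ℤ) hf (k:ℤ) ((a:ℤ) - (k:ℤ)*(g:ℤ))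
          rw [show (a:ℤ) - (k:ℤ)*(g:ℤ) + (g:ℤ)*(k:ℤ) = (a:ℤ) by ring] at hs
          rw [← hs]
          exact h3
        · intro a ha
          simp only [Finset.mem_coe, Finset.mem_filter, Finset.mem_Ico, Finset.mem_range] at ha ⊢
          obtain ⟨h1, h2⟩ := ha
          refine ⟨⟨by omega, by omega⟩, ?_⟩
          have hcast : ((a + k*g : ℕ) : ℤ) = (a:ℤ) + (g:ℤ)*(k:ℤ) := by push_cast; ring
          rw [hcast]
          have hs := shift_all f (g:ℤ) hf (k:ℤ) (a:ℤ)
          rw [hs]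
          exact h2
        · intro a ha
          simp only [Finset.mem_coe, Finset.mem_filter, Finset.mem_Ico] at ha ⊢
          omega
        · intro a ha
          simp only [Finset.mem_coe, Finset.mem_filter, Finset.mem_range] at ha ⊢
          omega
      rw [hIco]
      ring
    · rw [Finset.disjoint_left]
      intro a ha hb
      simp only [Finset.mem_filter, Finset.mem_range, Finset.mem_Ico] at ha hb
      omega

lemma period_dvd (A : Finset ℕ) (hm : 0 < m) (hn : 0 < n) (hco : Nat.Coprime m n)
    (hA : A ⊆ Finset.range (m/2+n/2)) (hcard : A.card = n/2) (d : ℤ)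
    (hper : ∀ x, hfun m n A (x + d) = hfun m n A x) : ((m+n:ℕ):ℤ) ∣ d := by
  have hL : 0 < m + n := by omega
  by_cases hd0 : d = 0
  · simp [hd0]
  set g := Int.gcd d ((m+n:ℕ):ℤ) with hg
  have hgdvdL : (g:ℤ) ∣ ((m+n:ℕ):ℤ) := Int.gcd_dvd_right _ _
  have hgdvdd : (g:ℤ) ∣ d := Int.gcd_dvd_left _ _
  have hgL : g ∣ m + n := by exact_mod_cast hgdvdL
  have hg0 : 0 < g := by
    rcases Nat.eq_zero_or_pos g with h | h
    · exfalso
      have := Int.gcd_eq_zero_iff.mp (by omega : Int.gcd d ((m+n:ℕ):ℤ) = 0)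
      exact hd0 this.1
    · exact h
  -- hfun A has period g
  have hperg : ∀ x : ℤ, hfun m n A (x + (g:ℤ)) = hfun m n A x := by
    intro x
    have hbez : (g:ℤ) = d * Int.gcdA d ((m+n:ℕ):ℤ) + ((m+n:ℕ):ℤ) * Int.gcdB d ((m+n:ℕ):ℤ) :=
      Int.gcd_eq_gcd_ab d ((m+n:ℕ):ℤ)
    have h1 : hfun m n A (x + d * Int.gcdA d ((m+n:ℕ):ℤ)) = hfun m n A x :=
      shift_all (hfun m n A) d hper _ x
    have h2 : hfun m n A (x + (g:ℤ)) = hfun m n A (x + d * Int.gcdA d ((m+n:ℕ):ℤ)) := by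
      apply hfun_congr
      rw [hbez]
      exact ⟨Int.gcdB d ((m+n:ℕ):ℤ), by ring⟩
    rw [h2, h1]
  -- count argument
  have hcount : ((Finset.range (m+n)).filter (fun i : ℕ => hfun m n A (i:ℤ) = true)).card = n := by
    rw [hfun_count m n A hm hn hco hA, hcard]; omega
  have hLg : (m+n) = ((m+n)/g) * g := (Nat.div_mul_cancel hgL).symm
  have hblock := card_filter_period_block (hfun m n A) g ((m+n)/g) hperg
  rw [← hLg, hcount] at hblock
  have hdvd_n : (m+n)/g ∣ n := ⟨_, hblock⟩
  have hdvd_L : (m+n)/g ∣ m+n := ⟨g, hLg⟩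
  have hcopn : Nat.Coprime (m+n) n := Nat.coprime_add_self_left.mpr hco
  have h1 : (m+n)/g ∣ Nat.gcd (m+n) n := Nat.dvd_gcd hdvd_L hdvd_n
  rw [hcopn] at h1
  have hgeq : g = m + n := by
    have h2 : (m+n)/g = 1 := Nat.dvd_one.mp h1
    rw [h2, one_mul] at hLg
    omega
  rw [← hgeq]
  exact_mod_cast hgdvdd

lemma hfun_small (A : Finset ℕ) (hL : 0 < m + n)
    (hpar : 2*(m/2+n/2) + 1 = m+n ∨ (2*(m/2+n/2) + 2 = m+n ∧ n % 2 = 1 ∧ m % 2 = 1))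
    (i : ℕ) (hi : i < m/2+n/2) :
    hfun m n A ((i+1 : ℕ):ℤ) = decide (i ∈ A) := by
  rw [hfun_nat m n A hL (i+1) (by omega)]
  rw [if_neg (show ¬(i+1 = 0) by omega)]
  rw [if_pos (show 2*(i+1) < m+n by omega)]
  simp

lemma hfun_ext (A A' : Finset ℕ) (hm : 0 < m) (hn : 0 < n) (hco : Nat.Coprime m n)
    (hA : A ⊆ Finset.range (m/2+n/2)) (hA' : A' ⊆ Finset.range (m/2+n/2))
    (h : ∀ x : ℤ, hfun m n A x = hfun m n A' x) : A = A' := by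
  have hL : 0 < m + n := by omega
  have hpar := parity_facts m n hm hn hco
  ext i
  by_cases hi : i < m/2+n/2
  · have := h ((i+1 : ℕ) : ℤ)
    rw [hfun_small m n A hL hpar i hi, hfun_small m n A' hL hpar i hi] at this
    constructor
    · intro hmem
      exact of_decide_eq_true (by rw [← this]; exact decide_eq_true hmem)
    · intro hmem
      exact of_decide_eq_true (by rw [this]; exact decide_eq_true hmem)
  · constructor
    · intro hmem
      exact absurd (Finset.mem_range.mp (hA hmem)) hi
    · intro hmem
      exact absurd (Finset.mem_range.mp (hA' hmem)) hi

lemma phi_inj (A A' : Finset ℕ) (hm : 0 < m) (hn : 0 < n) (hco : Nat.Coprime m n)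
    (hA : A ⊆ Finset.range (m/2+n/2)) (hcard : A.card = n/2)
    (hA' : A' ⊆ Finset.range (m/2+n/2)) (hcard' : A'.card = n/2)
    (heq : phi m n A = phi m n A') : A = A' := by
  have hL : 0 < m + n := by omega
  have hpar := parity_facts m n hm hn hco
  set p := minIdx m n A with hp
  set p' := minIdx m n A' with hp'
  set s : ℤ := (p:ℤ) - (p':ℤ) with hs
  have hfp : ∀ j : ℤ, hfun m n A ((p:ℤ) + j) = hfun m n A' ((p':ℤ) + j) := by
    intro j
    rw [← fp_phi m n A hL j, ← fp_phi m n A' hL j, heq]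
  have hAA' : ∀ x : ℤ, hfun m n A' x = hfun m n A (x + s) := by
    intro x
    have := hfp (x - (p':ℤ))
    rw [show (p':ℤ) + (x - (p':ℤ)) = x by ring, show (p:ℤ) + (x - (p':ℤ)) = x + s by rw [hs]; ring] at this
    exact this.symm
  have hstar : ∀ x : ℤ, hfun m n A (s - x) = hfun m n A (s + x) := by
    intro x
    have h1 := hfun_symm m n A' hL x
    rw [hAA' (-x), hAA' x] at h1
    rw [show -x + s = s - x by ring, show x + s = s + x by ring] at h1
    exact h1
  have h2s : ∀ x : ℤ, hfun m n A (x + 2*s) = hfun m n A x := by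
    intro x
    have h1 := hstar (-(x + s))
    rw [show s - -(x+s) = x + 2*s by ring, show s + -(x+s) = -x by ring] at h1
    rw [h1, hfun_symm m n A hL]
  have hdvd2s : ((m+n:ℕ):ℤ) ∣ 2*s := period_dvd m n A hm hn hco hA hcard (2*s) h2s
  have hfinal : (∀ x : ℤ, hfun m n A' x = hfun m n A x) ∨ False := by
    rcases hpar with hodd | ⟨heven, hn1, hm1⟩
    · -- L odd, cancel 2
      have hLodd : (m+n) % 2 = 1 := by omega
      have hcop2 : IsCoprime ((m+n:ℕ):ℤ) (2:ℤ) := by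
        rw [Int.isCoprime_iff_gcd_eq_one]
        have h2 : Int.gcd ((m+n:ℕ):ℤ) 2 = Nat.gcd (m+n) 2 := by
          unfold Int.gcd
          rw [Int.natAbs_natCast]
          rfl
        rw [h2]
        exact Nat.coprime_two_right.mpr (Nat.odd_iff.mpr hLodd)
      have hdvds : ((m+n:ℕ):ℤ) ∣ s := hcop2.dvd_of_dvd_mul_left hdvd2s
      left
      intro x
      rw [hAA' x]
      apply hfun_congr
      simpa using hdvds
    · -- L even
      obtain ⟨u, hu⟩ := hdvd2s
      set Fz : ℤ := ((m/2+n/2 : ℕ) : ℤ) with hFz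
      have hLz : ((m+n:ℕ):ℤ) = 2*Fz + 2 := by rw [hFz]; exact_mod_cast heven.symm
      have hsu : s = (Fz + 1) * u := by
        have h2 : 2*s = 2*((Fz+1)*u) := by rw [hu, hLz]; ring
        linarith
      rcases Int.even_or_odd u with ⟨v, hv⟩ | ⟨v, hv⟩
      · have hdvds : ((m+n:ℕ):ℤ) ∣ s := ⟨v, by rw [hsu, hv, hLz]; ring⟩
        left
        intro x
        rw [hAA' x]
        apply hfun_congr
        simpa using hdvds
      · exfalso
        have hFc : ((m/2+n/2+1 : ℕ):ℤ) = Fz + 1 := by rw [hFz]; push_cast; ring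
        have hcongr : ((m+n:ℕ):ℤ) ∣ (0 + s) - ((m/2+n/2+1 : ℕ):ℤ) := by
          refine ⟨v, ?_⟩
          rw [hFc, hsu, hv, hLz]
          ring
        have h0 := hAA' 0
        rw [hfun_congr m n A hcongr] at h0
        rw [hfun_nat m n A hL (m/2+n/2+1) (by omega), if_neg (by omega), if_neg (by omega),
          if_pos (by omega)] at h0
        rw [show ((0:ℤ)) = ((0:ℕ):ℤ) by norm_num, hfun_nat m n A' hL 0 (by omega), if_pos rfl] at h0
        simp [hn1] at h0
  rcases hfinal with h | h
  · exact (hfun_ext m n A' A hm hn hco hA' hA h).symm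
  · exact absurd h not_false

lemma fp_nat (P : List Bool) (hL : 0 < m + n) (i : ℕ) (hi : i < m + n) :
    fp m n P (i:ℤ) = P.getD i false := by
  unfold fp
  congr 1
  rw [Int.emod_eq_of_lt (by positivity) (by exact_mod_cast hi)]
  simp

lemma phi_surj (D : List Bool) (hm : 0 < m) (hn : 0 < n) (hco : Nat.Coprime m n)
    (hD : IsDyck m n D) (hRC : IsRankComplement m n D D) :
    ∃ A : Finset ℕ, A ⊆ Finset.range (m/2+n/2) ∧ A.card = n/2 ∧ phi m n A = D := by
  have hL : 0 < m + n := by omega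
  have hpar := parity_facts m n hm hn hco
  obtain ⟨M, k, hk, hrhok, hmain, hsymm⟩ := rc_to_symm m n D hm hn hco hD hRC
  obtain ⟨⟨hDl, hDc⟩, hDpos⟩ := hD
  set Fz : ℤ := ((m/2+n/2 : ℕ) : ℤ) with hFz
  have hFz0 : 0 ≤ Fz := by rw [hFz]; positivity
  -- fixed-letter value
  have hfix : ∀ t : ℤ, ((m+n:ℕ):ℤ) ∣ 2*t - ((k:ℤ)-1) →
      val m n (fp m n D t) = M - 2 * rho m n D t := by
    intro t ht
    have h1 : rho m n D (t+1) = rho m n D ((k:ℤ) - t) := by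
      apply rho_congr
      have : (t+1) - ((k:ℤ) - t) = 2*t - ((k:ℤ)-1) := by ring
      rw [this]; exact ht
    rw [hmain t] at h1
    have h2 := rho_step m n D hDl hDc hL t
    linarith
  -- choose t
  have hT : ∃ t : ℤ, (((m+n:ℕ):ℤ) ∣ 2*t - ((k:ℤ)-1)) ∧
      (fp m n D t = decide (n % 2 = 1)) ∧
      (2*(m/2+n/2) + 2 = m+n → fp m n D (t + (Fz+1)) = false) := by
    rcases hpar with hodd | ⟨heven, hn1, hm1⟩
    · -- L odd
      have hLz : ((m+n:ℕ):ℤ) = 2*Fz + 1 := by rw [hFz]; exact_mod_cast hodd.symm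
      set j0 : ℤ := (k:ℤ) * (Fz + 1) with hj0
      have hM2 : M = 2 * rho m n D j0 := by
        have hc : rho m n D ((k:ℤ) - j0) = rho m n D j0 := by
          apply rho_congr
          refine ⟨-(k:ℤ), ?_⟩
          rw [hLz, hj0]; ring
        have := hmain j0
        rw [hc] at this
        linarith
      set t : ℤ := ((k:ℤ)-1) * (Fz + 1) with ht
      have htdvd : ((m+n:ℕ):ℤ) ∣ 2*t - ((k:ℤ)-1) := by
        refine ⟨(k:ℤ)-1, ?_⟩
        rw [hLz, ht]; ring
      have hv := hfix t htdvd
      refine ⟨t, htdvd, ?_, by omega⟩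
      cases hb : fp m n D t
      · rw [hb] at hv
        have hval : val m n false = -(n:ℤ) := by simp [val]
        rw [hval, hM2] at hv
        have h2 : (2:ℤ) ∣ (n:ℤ) := ⟨rho m n D t - rho m n D j0, by linarith⟩
        have h2n : 2 ∣ n := by exact_mod_cast h2
        have : n % 2 = 0 := by omega
        simp [this]
      · rw [hb] at hv
        have hval : val m n true = (m:ℤ) := by simp [val]
        rw [hval, hM2] at hv
        have h2 : (2:ℤ) ∣ (m:ℤ) := ⟨rho m n D j0 - rho m n D t, by linarith⟩
        have h2m : 2 ∣ m := by exact_mod_cast h2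
        have : n % 2 = 1 := by omega
        simp [this]
    · -- L even
      have hLz : ((m+n:ℕ):ℤ) = 2*Fz + 2 := by rw [hFz]; exact_mod_cast heven.symm
      -- k is odd
      have hkodd : k % 2 = 1 := by
        by_contra hke
        have hke2 : k % 2 = 0 := by omega
        set j0 : ℤ := ((k/2 : ℕ) : ℤ) with hj0
        have h2j0 : 2*j0 = (k:ℤ) := by rw [hj0]; exact_mod_cast (by omega : 2*(k/2) = k)
        have hM2 : M = 2 * rho m n D j0 := by
          have hc : rho m n D ((k:ℤ) - j0) = rho m n D j0 := by
            apply rho_congr; refine ⟨0, by linarith⟩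
          have := hmain j0
          rw [hc] at this; linarith
        set j1 : ℤ := j0 + (Fz + 1) with hj1
        have hM2' : M = 2 * rho m n D j1 := by
          have hc : rho m n D ((k:ℤ) - j1) = rho m n D j1 := by
            apply rho_congr
            refine ⟨-1, ?_⟩
            rw [hj1, hLz]
            linarith
          have := hmain j1
          rw [hc] at this; linarith
        have heqr : rho m n D j0 = rho m n D j1 := by omega
        have hdvd := rho_inj m n D hDl hL hco heqr
        rw [hj1] at hdvd
        have hdvd2 : ((m+n:ℕ):ℤ) ∣ (Fz + 1) := by
          have h3 := dvd_neg.mpr hdvd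
          have : -(j0 - (j0 + (Fz+1))) = Fz + 1 := by ring
          rwa [this] at h3
        have hle := Int.le_of_dvd (by linarith) hdvd2
        rw [hLz] at hle
        linarith
      set t0 : ℤ := (((k-1)/2 : ℕ) : ℤ) with ht0
      have h2t0 : 2*t0 = (k:ℤ) - 1 := by
        have hnat : 2*((k-1)/2) = k - 1 := by omega
        rw [ht0, show (2:ℤ)*((((k-1)/2 : ℕ)):ℤ) = ((2*((k-1)/2) : ℕ):ℤ) by push_cast; ring,
          hnat]
        push_cast [Nat.cast_sub (by omega : 1 ≤ k)]
        ring
      set t1 : ℤ := t0 + (Fz + 1) with ht1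
      have ht0dvd : ((m+n:ℕ):ℤ) ∣ 2*t0 - ((k:ℤ)-1) := ⟨0, by linarith⟩
      have ht1dvd : ((m+n:ℕ):ℤ) ∣ 2*t1 - ((k:ℤ)-1) := by
        refine ⟨1, ?_⟩
        rw [ht1, hLz]
        linarith
      have hne : fp m n D t0 ≠ fp m n D t1 := by
        intro hfe
        have hv0 := hfix t0 ht0dvd
        have hv1 := hfix t1 ht1dvd
        rw [hfe] at hv0
        have heqr : rho m n D t0 = rho m n D t1 := by linarith
        have hdvd := rho_inj m n D hDl hL hco heqr
        rw [ht1] at hdvd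
        have hdvd2 : ((m+n:ℕ):ℤ) ∣ (Fz + 1) := by
          have h3 := dvd_neg.mpr hdvd
          have : -(t0 - (t0 + (Fz+1))) = Fz + 1 := by ring
          rwa [this] at h3
        have hle := Int.le_of_dvd (by linarith) hdvd2
        rw [hLz] at hle
        linarith
      cases hb0 : fp m n D t0
      · -- t0 is false, use t1
        refine ⟨t1, ht1dvd, ?_, ?_⟩
        · have : fp m n D t1 = true := by
            cases hb1 : fp m n D t1
            · rw [hb0, hb1] at hne; exact absurd rfl hne
            · rfl
          rw [this]
          simp [hn1]
        · intro _
          have hc : fp m n D (t1 + (Fz+1)) = fp m n D t0 := by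
            apply fp_congr
            refine ⟨1, ?_⟩
            rw [ht1, hLz]
            ring
          rw [hc, hb0]
      · -- t0 is true
        refine ⟨t0, ht0dvd, ?_, ?_⟩
        · rw [hb0]; simp [hn1]
        · intro _
          have : fp m n D t1 = false := by
            cases hb1 : fp m n D t1
            · rfl
            · rw [hb0, hb1] at hne; exact absurd rfl hne
          rw [← ht1]
          exact this
  obtain ⟨t, htdvd, htval, hthalf⟩ := hT
  -- the candidate set
  set A : Finset ℕ := (Finset.range (m/2+n/2)).filter
    (fun i : ℕ => fp m n D (t + 1 + (i:ℤ)) = true) with hA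
  have hAsub : A ⊆ Finset.range (m/2+n/2) := Finset.filter_subset _ _
  -- key identity
  have hkey : ∀ x : ℤ, hfun m n A x = fp m n D (t + x) := by
    intro x
    set r : ℕ := (x % ((m+n:ℕ):ℤ)).toNat with hr
    have hrlt : r < m + n := emod_toNat_lt m n hL x
    have hrx : ((m+n:ℕ):ℤ) ∣ x - (r:ℤ) := by
      have h0 : 0 ≤ x % ((m+n:ℕ):ℤ) := Int.emod_nonneg x (by exact_mod_cast hL.ne')
      have : (r:ℤ) = x % ((m+n:ℕ):ℤ) := by rw [hr]; exact Int.toNat_of_nonneg h0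
      rw [this]; exact Int.dvd_self_sub_of_emod_eq rfl
    have h1 : hfun m n A x = hfun m n A (r:ℤ) := hfun_congr m n A hrx
    have h2 : fp m n D (t + x) = fp m n D (t + (r:ℤ)) := by
      apply fp_congr
      have : (t + x) - (t + (r:ℤ)) = x - (r:ℤ) := by ring
      rw [this]; exact hrx
    rw [h1, h2, hfun_nat m n A hL r hrlt]
    by_cases hc0 : r = 0
    · rw [if_pos hc0, hc0]
      rw [show t + ((0:ℕ):ℤ) = t by norm_num]
      exact htval.symm
    · rw [if_neg hc0]
      by_cases hc1 : 2*r < m+n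
      · rw [if_pos hc1]
        have hrF : r - 1 < m/2+n/2 := by omega
        have hmem : (r-1 ∈ A) ↔ fp m n D (t + (r:ℤ)) = true := by
          rw [hA, Finset.mem_filter, Finset.mem_range]
          constructor
          · rintro ⟨_, hf⟩
            rw [← hf]
            congr 1
            push_cast [Nat.cast_sub (by omega : 1 ≤ r)]
            ring
          · intro hf
            refine ⟨hrF, ?_⟩
            rw [← hf]
            congr 1
            push_cast [Nat.cast_sub (by omega : 1 ≤ r)]
            ring
        cases hfd : fp m n D (t + (r:ℤ))
        · simp [hmem, hfd]
        · simp [hmem, hfd]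
      · by_cases hc2 : 2*r = m+n
        · rw [if_neg hc1, if_pos hc2]
          have hev : 2*(m/2+n/2) + 2 = m+n := by omega
          have hreq : (r:ℤ) = Fz + 1 := by
            rw [hFz]
            push_cast
            omega
          rw [hreq]
          exact (hthalf hev).symm
        · rw [if_neg hc1, if_neg hc2]
          have hrF : m+n-r-1 < m/2+n/2 := by omega
          have hcast : ((m+n-r : ℕ):ℤ) = ((m+n:ℕ):ℤ) - (r:ℤ) := by
            push_cast [Nat.cast_sub (by omega : r ≤ m+n)]
            ring
          have hstep1 : fp m n D (t + 1 + ((m+n-r-1 : ℕ):ℤ)) = fp m n D (t - (r:ℤ)) := by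
            apply fp_congr
            have hcast2 : ((m+n-r-1 : ℕ):ℤ) = ((m+n:ℕ):ℤ) - (r:ℤ) - 1 := by
              push_cast [Nat.cast_sub (by omega : r ≤ m+n), Nat.cast_sub (by omega : 1 ≤ m+n-r)]
              ring
            rw [hcast2]
            refine ⟨1, by ring⟩
          have hstep2 : fp m n D (t - (r:ℤ)) = fp m n D (t + (r:ℤ)) := by
            have hs := hsymm (t + (r:ℤ))
            have hc : fp m n D ((k:ℤ) - 1 - (t + (r:ℤ))) = fp m n D (t - (r:ℤ)) := by
              apply fp_congr
              obtain ⟨c, hc⟩ := htdvd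
              refine ⟨-c, ?_⟩
              have : ((k:ℤ) - 1 - (t + (r:ℤ))) - (t - (r:ℤ)) = -(2*t - ((k:ℤ)-1)) := by ring
              rw [this, hc]
              ring
            rw [← hc, hs]
          have hmem : (m+n-r-1 ∈ A) ↔ fp m n D (t + (r:ℤ)) = true := by
            rw [hA, Finset.mem_filter, Finset.mem_range]
            constructor
            · rintro ⟨_, hf⟩
              rw [hstep1] at hf
              rw [← hstep2]
              exact hf
            · intro hf
              refine ⟨hrF, ?_⟩
              rw [hstep1, hstep2]
              exact hf
          cases hfd : fp m n D (t + (r:ℤ))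
          · simp [hmem, hfd]
          · simp [hmem, hfd]
  -- cardinality of A
  have hDcount : ((Finset.range (m+n)).filter (fun i : ℕ => fp m n D (i:ℤ) = true)).card = n := by
    have h0 : (Finset.range (m+n)).filter (fun i : ℕ => fp m n D (i:ℤ) = true)
        = (Finset.range D.length).filter (fun i : ℕ => D.getD i false = true) := by
      rw [hDl]
      apply Finset.filter_congr
      intro i hi
      rw [fp_nat m n D hL i (Finset.mem_range.mp hi)]
    rw [h0, ← count_true_eq_card, hDc]
  have hAcount : n % 2 + 2 * A.card = n := by
    have h1 := hfun_count m n A hm hn hco hAsub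
    have h2 : ((Finset.range (m+n)).filter (fun i : ℕ => hfun m n A (i:ℤ) = true)).card
        = ((Finset.range (m+n)).filter (fun i : ℕ => fp m n D (t + (i:ℤ)) = true)).card := by
      apply congrArg
      apply Finset.filter_congr
      intro i _
      rw [hkey (i:ℤ)]
    have h3 := card_filter_shift m n hL (fp m n D) (fun x y h => fp_congr m n D h) t
    rw [h2, h3, hDcount] at h1
    omega
  have hAcard : A.card = n / 2 := by omega
  refine ⟨A, hAsub, hAcard, ?_⟩
  -- now show phi A = D
  have hbasec : (baseWord m n A).count true = n := by
    rw [baseWord, count_ofFn_eq m n (fun x : ℤ => hfun m n A x) hL,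
      hfun_count m n A hm hn hco hAsub, hAcard]
    omega
  have hbasel : (baseWord m n A).length = m + n := List.length_ofFn
  have hshift : ∀ j : ℤ, rho m n (baseWord m n A) j
      = rho m n D (j + t) - rho m n D t := by
    apply rho_shift m n _ _ hbasel hbasec hDl hDc hL
    intro j
    rw [fp_baseWord m n A hL j, hkey j]
    congr 1
    ring
  obtain ⟨hplt, hpmin⟩ := minIdx_spec m n A hL
  set p := minIdx m n A with hp
  have hpt : rho m n D ((p:ℤ) + t) = 0 := by
    have h1 : rho m n (baseWord m n A) (p:ℤ) ≤ rho m n (baseWord m n A) (-t) := by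
      rw [rho_eq_rank m n _ p hplt]
      exact hpmin _ (emod_toNat_lt m n hL (-t))
    rw [hshift (p:ℤ), hshift (-t)] at h1
    rw [show -t + t = (0:ℤ) by ring, rho_zero] at h1
    have h2 := rho_nonneg m n D hL ⟨⟨hDl, hDc⟩, hDpos⟩ ((p:ℤ) + t)
    linarith
  have hdvdpt : ((m+n:ℕ):ℤ) ∣ ((p:ℤ) + t) - 0 := by
    apply rho_inj m n D hDl hL hco
    rw [hpt, rho_zero]
  apply List.ext_getElem (by simp [phi, hDl])
  intro i h1 h2
  have hiL : i < m + n := by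
    have := h2; omega
  rw [show (phi m n A)[i] = hfun m n A ((p:ℤ) + (i:ℕ)) from List.getElem_ofFn _]
  rw [hkey ((p:ℤ) + (i:ℕ))]
  have hc : fp m n D (t + ((p:ℤ) + (i:ℕ))) = fp m n D ((i:ℕ):ℤ) := by
    apply fp_congr
    have hd := hdvdpt
    rw [sub_zero] at hd
    have : (t + ((p:ℤ) + (i:ℕ))) - ((i:ℕ):ℤ) = ((p:ℤ) + t) := by ring
    rw [this]
    exact hd
  rw [hc, fp_nat m n D hL i hiL, List.getD_eq_getElem _ _ (by omega)]

theorem card_self_rank_complement' (m n : ℕ) (hm : 0 < m) (hn : 0 < n)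
    (hco : Nat.Coprime m n) :
    {D : List Bool | IsDyck m n D ∧ IsRankComplement m n D D}.ncard =
      (m / 2 + n / 2).choose (m / 2) := by
  have hset : {D : List Bool | IsDyck m n D ∧ IsRankComplement m n D D}
      = (fun A => phi m n A) '' ↑((Finset.range (m/2+n/2)).powersetCard (n/2)) := by
    ext D
    simp only [Set.mem_setOf_eq, Set.mem_image, Finset.mem_coe]
    constructor
    · rintro ⟨hDyck, hRC⟩
      obtain ⟨A, hsub, hcard, heq⟩ := phi_surj m n D hm hn hco hDyck hRC
      exact ⟨A, Finset.mem_powersetCard.mpr ⟨hsub, hcard⟩, heq⟩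
    · rintro ⟨A, hmem, rfl⟩
      obtain ⟨hsub, hcard⟩ := Finset.mem_powersetCard.mp hmem
      exact ⟨phi_isDyck m n A hm hn hco hsub hcard, phi_isRC m n A hm hn hco hsub hcard⟩
  have hinj : Set.InjOn (fun A => phi m n A)
      ↑((Finset.range (m/2+n/2)).powersetCard (n/2)) := by
    intro A hA A' hA' heq
    simp only [Finset.mem_coe] at hA hA'
    obtain ⟨hs, hc⟩ := Finset.mem_powersetCard.mp hA
    obtain ⟨hs', hc'⟩ := Finset.mem_powersetCard.mp hA'
    exact phi_inj m n A A' hm hn hco hs hc hs' hc' heq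
  rw [hset, Set.ncard_image_of_injOn hinj, Set.ncard_coe_finset,
    Finset.card_powersetCard, Finset.card_range]
  have h2 : (m/2+n/2) - (m/2) = n/2 := by omega
  calc (m/2+n/2).choose (n/2) = (m/2+n/2).choose ((m/2+n/2) - (m/2)) := by rw [h2]
    _ = (m/2+n/2).choose (m/2) := Nat.choose_symm (by omega)


/-- For coprime positive `m, n`, the number of `(m,n)`-Dyck paths
equal to their own rank complement is `binomial(⌊m/2⌋+⌊n/2⌋, ⌊m/2⌋)`. -/
theorem card_self_rank_complement (m n : ℕ) (hm : 0 < m) (hn : 0 < n)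
    (hco : Nat.Coprime m n) :
    {D : List Bool | IsDyck m n D ∧ IsRankComplement m n D D}.ncard =
      (m / 2 + n / 2).choose (m / 2) := by
  exact card_self_rank_complement' m n hm hn hco
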